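/- Define F : ℝ⁴ → ℝ² by F(x₁,x₂,x₃,x₄) = e⁷·(x₁, (√3/2)x₂ − (1/2)x₄), and equip ℝ⁴ with the Euclidean metric g and the standard complex structures I, J, K. Then F is an almost h-conformal slant submersion with slant angles θ_I = π/6, θ_J = π/2, θ_K = π/3 and dilation λ = e⁷. Concretely: ker F_* = span{∂/∂x₃, (1/2)∂/∂x₂ + (√3/2)∂/∂x₄} at every point; g(F_*X, F_*Y) = e¹⁴ g(X,Y) for all X,Y ∈ (ker F_*)^⊥; for every nonzero vertical X the angle between IX and ker F_* equals π/6, the angle between JX and ker F_* equals π/2, and the angle between KX and ker F_* equals π/3. -/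

import Mathlib

open scoped InnerProductSpace

/-- the map `F(x₁,x₂,x₃,x₄) = e⁷·(x₁, (√3/2)x₂ − (1/2)x₄)` from `ℝ⁴` to `ℝ²`. -/
noncomputable def Fmap19 : EuclideanSpace ℝ (Fin 4) →ₗ[ℝ] EuclideanSpace ℝ (Fin 2) where
  toFun x := WithLp.toLp 2 ![Real.exp 7 * x 0, Real.exp 7 * (Real.sqrt 3 / 2 * x 1 - 1 / 2 * x 3)]
  map_add' x y := by
    ext i
    fin_cases i <;> simp [PiLp.add_apply] <;> ring
  map_smul' c x := by
    ext i
    fin_cases i <;> simp [PiLp.smul_apply] <;> ring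

/-- the standard complex structure `I` on `ℝ⁴`:
`I ∂₁ = ∂₂, I ∂₂ = −∂₁, I ∂₃ = ∂₄, I ∂₄ = −∂₃`. -/
def Iop19 : EuclideanSpace ℝ (Fin 4) →ₗ[ℝ] EuclideanSpace ℝ (Fin 4) where
  toFun x := WithLp.toLp 2 ![-x 1, x 0, -x 3, x 2]
  map_add' x y := by
    ext i
    fin_cases i <;> simp [PiLp.add_apply] <;> ring
  map_smul' c x := by
    ext i
    fin_cases i <;> simp [PiLp.smul_apply] <;> ring

/-- the standard complex structure `J` on `ℝ⁴`:
`J ∂₁ = ∂₃, J ∂₂ = −∂₄, J ∂₃ = −∂₁, J ∂₄ = ∂₂`. -/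
def Jop19 : EuclideanSpace ℝ (Fin 4) →ₗ[ℝ] EuclideanSpace ℝ (Fin 4) where
  toFun x := WithLp.toLp 2 ![-x 2, x 3, x 0, -x 1]
  map_add' x y := by
    ext i
    fin_cases i <;> simp [PiLp.add_apply] <;> ring
  map_smul' c x := by
    ext i
    fin_cases i <;> simp [PiLp.smul_apply] <;> ring

/-- the standard complex structure `K` on `ℝ⁴`:
`K ∂₁ = ∂₄, K ∂₂ = ∂₃, K ∂₃ = −∂₂, K ∂₄ = −∂₁`. -/
def Kop19 : EuclideanSpace ℝ (Fin 4) →ₗ[ℝ] EuclideanSpace ℝ (Fin 4) where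
  toFun x := WithLp.toLp 2 ![-x 3, -x 2, x 1, x 0]
  map_add' x y := by
    ext i
    fin_cases i <;> simp [PiLp.add_apply] <;> ring
  map_smul' c x := by
    ext i
    fin_cases i <;> simp [PiLp.smul_apply] <;> ring

/-- the vertical vector `(1/2)∂₂ + (√3/2)∂₄`. -/
noncomputable def vert19 : EuclideanSpace ℝ (Fin 4) :=
  (1 / 2 : ℝ) • EuclideanSpace.single (1 : Fin 4) (1 : ℝ)
    + (Real.sqrt 3 / 2) • EuclideanSpace.single (3 : Fin 4) (1 : ℝ)

lemma mem_ker19 (x : EuclideanSpace ℝ (Fin 4)) :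
    x ∈ LinearMap.ker Fmap19 ↔ x 0 = 0 ∧ x 3 = Real.sqrt 3 * x 1 := by
  rw [LinearMap.mem_ker]
  constructor
  · intro h
    have h0 : (Fmap19 x) 0 = 0 := by rw [h]; rfl
    have h1 : (Fmap19 x) 1 = 0 := by rw [h]; rfl
    simp only [Fmap19, LinearMap.coe_mk, AddHom.coe_mk, Matrix.cons_val_zero,
      Matrix.cons_val_one, Matrix.head_cons] at h0 h1
    have e0 := (mul_eq_zero.mp h0).resolve_left (Real.exp_ne_zero 7)
    have e1 := (mul_eq_zero.mp h1).resolve_left (Real.exp_ne_zero 7)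
    exact ⟨e0, by linarith⟩
  · rintro ⟨h0, h3⟩
    ext i
    fin_cases i <;> simp [Fmap19, h0, h3] <;> ring_nf

lemma vert19_0 : vert19 0 = 0 := by simp [vert19, EuclideanSpace.single_apply]
lemma vert19_1 : vert19 1 = 1/2 := by simp [vert19, EuclideanSpace.single_apply]
lemma vert19_2 : vert19 2 = 0 := by simp [vert19, EuclideanSpace.single_apply]
lemma vert19_3 : vert19 3 = Real.sqrt 3 / 2 := by simp [vert19, EuclideanSpace.single_apply]

lemma ker_eq19 :
    LinearMap.ker Fmap19
      = Submodule.span ℝ ({EuclideanSpace.single (2 : Fin 4) (1 : ℝ), vert19} :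
          Set (EuclideanSpace ℝ (Fin 4))) := by
  ext x
  rw [mem_ker19, Submodule.mem_span_pair]
  constructor
  · rintro ⟨h0, h3⟩
    refine ⟨x 2, 2 * x 1, ?_⟩
    ext i
    fin_cases i <;>
      simp [vert19, EuclideanSpace.single_apply, h0, h3] <;> ring
  · rintro ⟨a, b, rfl⟩
    constructor <;>
      simp [vert19, EuclideanSpace.single_apply] <;> ring
lemma sqrt3_sq : Real.sqrt 3 * Real.sqrt 3 = 3 :=
  Real.mul_self_sqrt (by norm_num)

lemma norm_sqrt_helper {c A B : ℝ} (hc : 0 ≤ c) (hAB : A = c ^ 2 * B) :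
    Real.sqrt A = c * Real.sqrt B := by
  rw [hAB, Real.sqrt_mul (sq_nonneg c), Real.sqrt_sq hc]

lemma inner_expand (x y : EuclideanSpace ℝ (Fin 4)) :
    ⟪x, y⟫_ℝ = x 0 * y 0 + x 1 * y 1 + x 2 * y 2 + x 3 * y 3 := by
  simp [PiLp.inner_apply, RCLike.inner_apply, Fin.sum_univ_four]
  ring
lemma surj19 : Function.Surjective Fmap19 := by
  intro y
  refine ⟨WithLp.toLp 2 ![y 0 / Real.exp 7, 0, 0, -2 * y 1 / Real.exp 7], ?_⟩
  ext i
  fin_cases i <;> simp [Fmap19] <;> (try field_simp) <;> (try ring)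

lemma horiz_mem (X : EuclideanSpace ℝ (Fin 4)) (hX : X ∈ (LinearMap.ker Fmap19)ᗮ) :
    X 2 = 0 ∧ X 1 = -(Real.sqrt 3) * X 3 := by
  have h2 := hX (EuclideanSpace.single (2 : Fin 4) (1 : ℝ))
    (by rw [mem_ker19]; simp [EuclideanSpace.single_apply])
  have hw := hX vert19 (by rw [mem_ker19, vert19_0, vert19_1, vert19_3]; constructor <;> ring)
  rw [inner_expand] at h2 hw
  simp [EuclideanSpace.single_apply] at h2
  rw [vert19_0, vert19_1, vert19_2, vert19_3] at hw
  have h3 : (0:ℝ) < Real.sqrt 3 := Real.sqrt_pos.mpr (by norm_num)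
  constructor
  · exact h2
  · nlinarith [sqrt3_sq]
lemma inner2_expand (x y : EuclideanSpace ℝ (Fin 2)) :
    ⟪x, y⟫_ℝ = x 0 * y 0 + x 1 * y 1 := by
  simp [PiLp.inner_apply, RCLike.inner_apply, Fin.sum_univ_two]
  ring

lemma conf19 (X Y : EuclideanSpace ℝ (Fin 4))
    (hX : X ∈ (LinearMap.ker Fmap19)ᗮ) (hY : Y ∈ (LinearMap.ker Fmap19)ᗮ) :
    ⟪Fmap19 X, Fmap19 Y⟫_ℝ = Real.exp 14 * ⟪X, Y⟫_ℝ := by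
  obtain ⟨hX2, hX1⟩ := horiz_mem X hX
  obtain ⟨hY2, hY1⟩ := horiz_mem Y hY
  rw [inner2_expand, inner_expand]
  have hF : ∀ Z : EuclideanSpace ℝ (Fin 4),
      (Fmap19 Z) 0 = Real.exp 7 * Z 0 ∧
      (Fmap19 Z) 1 = Real.exp 7 * (Real.sqrt 3 / 2 * Z 1 - 1 / 2 * Z 3) := by
    intro Z; constructor <;> simp [Fmap19]
  rw [(hF X).1, (hF X).2, (hF Y).1, (hF Y).2, hX2, hY2, hX1, hY1]
  have he : Real.exp 7 * Real.exp 7 = Real.exp 14 := by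
    rw [← Real.exp_add]; norm_num
  have key : ∀ a : ℝ, Real.sqrt 3 / 2 * (-Real.sqrt 3 * a) - 1 / 2 * a = -2 * a := by
    intro a; linear_combination (-(a) / 2) * sqrt3_sq
  rw [key, key]
  linear_combination (X 0 * Y 0 + 4 * X 3 * Y 3) * he - Real.exp 14 * X 3 * Y 3 * sqrt3_sq
noncomputable def e2v : EuclideanSpace ℝ (Fin 4) := EuclideanSpace.single (2 : Fin 4) (1 : ℝ)

lemma proj_formula (u : EuclideanSpace ℝ (Fin 4)) (c d : ℝ)
    (h2 : ⟪u - (c • e2v + d • vert19), e2v⟫_ℝ = 0)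
    (hw : ⟪u - (c • e2v + d • vert19), vert19⟫_ℝ = 0) :
    (Submodule.orthogonalProjectionOnto (LinearMap.ker Fmap19) u : EuclideanSpace ℝ (Fin 4))
      = c • e2v + d • vert19 := by
  apply Submodule.eq_starProjection_of_mem_of_inner_eq_zero (K := LinearMap.ker Fmap19)
  · rw [ker_eq19]
    exact Submodule.add_mem _
      (Submodule.smul_mem _ _ (Submodule.subset_span (by left; rfl)))
      (Submodule.smul_mem _ _ (Submodule.subset_span (by right; rfl)))
  · intro w hw'
    rw [ker_eq19, Submodule.mem_span_pair] at hw'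
    obtain ⟨a, b, rfl⟩ := hw'
    rw [inner_add_right, inner_smul_right, inner_smul_right]
    show a * ⟪_, e2v⟫_ℝ + b * ⟪_, vert19⟫_ℝ = 0
    rw [h2, hw]
    ring

lemma projI (v : EuclideanSpace ℝ (Fin 4)) (hv : v ∈ LinearMap.ker Fmap19) :
    ‖(Submodule.orthogonalProjectionOnto (LinearMap.ker Fmap19) (Iop19 v) :
        EuclideanSpace ℝ (Fin 4))‖ = Real.cos (Real.pi / 6) * ‖v‖ := by
  obtain ⟨h0, h3⟩ := (mem_ker19 v).mp hv
  have hproj := proj_formula (Iop19 v) (-(Real.sqrt 3) * v 1) (Real.sqrt 3 * v 2 / 2) ?_ ?_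
  · rw [hproj, Real.cos_pi_div_six, EuclideanSpace.norm_eq, EuclideanSpace.norm_eq]
    simp [Fin.sum_univ_four, Real.norm_eq_abs, sq_abs, PiLp.add_apply, PiLp.smul_apply,
      smul_eq_mul, e2v, vert19, EuclideanSpace.single_apply]
    norm_num
    apply norm_sqrt_helper (by positivity)
    rw [h0, h3]
    have hs : Real.sqrt 3 ^ 2 = 3 := Real.sq_sqrt (by norm_num)
    have hs4 : Real.sqrt 3 ^ 4 = 9 := by
      rw [show (4:ℕ) = 2*2 from rfl, pow_mul, hs]; norm_num
    ring_nf
    rw [hs, hs4]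
    ring
  · rw [inner_expand]
    simp [PiLp.sub_apply, PiLp.add_apply, PiLp.smul_apply, smul_eq_mul, e2v, vert19,
      EuclideanSpace.single_apply, Iop19, LinearMap.coe_mk, AddHom.coe_mk,
      Matrix.cons_val_zero, Matrix.cons_val_one, Matrix.head_cons]
    norm_num [h0, h3]
  · rw [inner_expand]
    simp [PiLp.sub_apply, PiLp.add_apply, PiLp.smul_apply, smul_eq_mul, e2v, vert19,
      EuclideanSpace.single_apply, Iop19, LinearMap.coe_mk, AddHom.coe_mk,
      Matrix.cons_val_zero, Matrix.cons_val_one, Matrix.head_cons]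
    norm_num [h0, h3]
    linear_combination (-(Real.sqrt 3) * v 2 / 8) * sqrt3_sq
lemma projJ (v : EuclideanSpace ℝ (Fin 4)) (hv : v ∈ LinearMap.ker Fmap19) :
    ‖(Submodule.orthogonalProjectionOnto (LinearMap.ker Fmap19) (Jop19 v) :
        EuclideanSpace ℝ (Fin 4))‖ = Real.cos (Real.pi / 2) * ‖v‖ := by
  obtain ⟨h0, h3⟩ := (mem_ker19 v).mp hv
  have hproj := proj_formula (Jop19 v) 0 0 ?_ ?_
  · rw [hproj, Real.cos_pi_div_two]
    simp
  · rw [inner_expand]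
    simp [PiLp.sub_apply, PiLp.add_apply, PiLp.smul_apply, e2v, vert19,
      EuclideanSpace.single_apply, Jop19, h0, h3]
    try ring
  · rw [inner_expand]
    simp [PiLp.sub_apply, PiLp.add_apply, PiLp.smul_apply, e2v, vert19,
      EuclideanSpace.single_apply, Jop19, h0, h3]
    try ring

lemma projK (v : EuclideanSpace ℝ (Fin 4)) (hv : v ∈ LinearMap.ker Fmap19) :
    ‖(Submodule.orthogonalProjectionOnto (LinearMap.ker Fmap19) (Kop19 v) :
        EuclideanSpace ℝ (Fin 4))‖ = Real.cos (Real.pi / 3) * ‖v‖ := by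
  obtain ⟨h0, h3⟩ := (mem_ker19 v).mp hv
  have hproj := proj_formula (Kop19 v) (v 1) (-(v 2) / 2) ?_ ?_
  · rw [hproj, Real.cos_pi_div_three, EuclideanSpace.norm_eq, EuclideanSpace.norm_eq]
    simp [Fin.sum_univ_four, Real.norm_eq_abs, sq_abs, PiLp.add_apply, PiLp.smul_apply,
      e2v, vert19, EuclideanSpace.single_apply]
    norm_num
    apply norm_sqrt_helper (by positivity)
    rw [h0, h3]
    have hs : Real.sqrt 3 ^ 2 = 3 := Real.sq_sqrt (by norm_num)
    ring_nf
    rw [hs]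
    ring
  · rw [inner_expand]
    simp [PiLp.sub_apply, PiLp.add_apply, PiLp.smul_apply, e2v, vert19,
      EuclideanSpace.single_apply, Kop19, h0, h3]
    try first
    | linear_combination (v 2 * Real.sqrt 3 / 8) * sqrt3_sq
    | linear_combination (v 2 * (1 - Real.sqrt 3) / 8) * sqrt3_sq
    | linear_combination (v 2 / 8) * sqrt3_sq
  · rw [inner_expand]
    simp [PiLp.sub_apply, PiLp.add_apply, PiLp.smul_apply, e2v, vert19,
      EuclideanSpace.single_apply, Kop19, h0, h3]
    try first
    | linear_combination (v 2 * Real.sqrt 3 / 8) * sqrt3_sq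
    | linear_combination (v 2 * (1 - Real.sqrt 3) / 8) * sqrt3_sq
    | linear_combination (v 2 / 8) * sqrt3_sq

/-- `F(x₁,x₂,x₃,x₄) = e⁷·(x₁, (√3/2)x₂ − (1/2)x₄)` is an almost
h-conformal slant submersion with slant angles `θ_I = π/6`, `θ_J = π/2`,
`θ_K = π/3` and dilation `λ = e⁷`: it is a surjective submersion,
`ker F_* = span{∂₃, (1/2)∂₂ + (√3/2)∂₄}`,
`g(F_* X, F_* Y) = e¹⁴ g(X, Y)` for horizontal `X, Y`, and for vertical `v`
the norms of the orthogonal projections of `I v`, `J v`, `K v` onto `ker F_*`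
are `cos(π/6)‖v‖`, `cos(π/2)‖v‖`, `cos(π/3)‖v‖` (i.e. the angles between
`I v`, `J v`, `K v` and `ker F_*` are `π/6`, `π/2`, `π/3` for `v ≠ 0`). -/
theorem example_stmt19 :
    Function.Surjective Fmap19 ∧
    (LinearMap.ker Fmap19
      = Submodule.span ℝ ({EuclideanSpace.single (2 : Fin 4) (1 : ℝ), vert19} :
          Set (EuclideanSpace ℝ (Fin 4)))) ∧
    (∀ X Y : EuclideanSpace ℝ (Fin 4),
      X ∈ (LinearMap.ker Fmap19)ᗮ → Y ∈ (LinearMap.ker Fmap19)ᗮ →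
        ⟪Fmap19 X, Fmap19 Y⟫_ℝ = Real.exp 14 * ⟪X, Y⟫_ℝ) ∧
    (∀ v ∈ LinearMap.ker Fmap19,
      ‖(Submodule.orthogonalProjectionOnto (LinearMap.ker Fmap19) (Iop19 v) :
          EuclideanSpace ℝ (Fin 4))‖ = Real.cos (Real.pi / 6) * ‖v‖) ∧
    (∀ v ∈ LinearMap.ker Fmap19,
      ‖(Submodule.orthogonalProjectionOnto (LinearMap.ker Fmap19) (Jop19 v) :
          EuclideanSpace ℝ (Fin 4))‖ = Real.cos (Real.pi / 2) * ‖v‖) ∧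
    (∀ v ∈ LinearMap.ker Fmap19,
      ‖(Submodule.orthogonalProjectionOnto (LinearMap.ker Fmap19) (Kop19 v) :
          EuclideanSpace ℝ (Fin 4))‖ = Real.cos (Real.pi / 3) * ‖v‖) := by
  exact ⟨surj19, ker_eq19, conf19, projI, projJ, projK⟩
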